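/- arXiv:1403.2778 — 3 statements merged into one kernel-verified Lean document; each statement's English description precedes it below -/
import Mathlib

section
/- Let γ > 0, Λ ≥ 1, and 0 < d with (d+γ)² − d(d+2γ)Λ² ≥ 0. In the plane, consider a point x at distance d above the point y = 0, with a ball B_γ(z) of radius γ tangent to the horizontal axis at y from below (center z at depth γ below y). Then any ray emanating from x whose angle θ with the downward vertical satisfies cos θ ≥ 1/Λ intersects the closed ball B̄_γ(z), and the distance from x to the first intersection point is at most d' = d(d+2γ)Λ / ((d+γ) + √((d+γ)² − d(d+2γ)Λ²)). -/
/-- Planar geometry: a ray from `x = (0,d)` whose angle `θ` with the downward vertical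
satisfies `cos θ ≥ 1/Λ` hits the closed ball of radius `γ` centered at `(0,-γ)`, at
distance at most `d' = d(d+2γ)Λ/((d+γ)+√((d+γ)²-d(d+2γ)Λ²))` from `x`. -/
theorem stmt7 (γ Lam d : ℝ) (hγ : 0 < γ) (hLam : 1 ≤ Lam) (hd : 0 < d)
    (hcond : (d + γ) ^ 2 - d * (d + 2 * γ) * Lam ^ 2 ≥ 0)
    (w : EuclideanSpace ℝ (Fin 2)) (hw : ‖w‖ = 1)
    (hangle : (inner ℝ w ((WithLp.equiv 2 (Fin 2 → ℝ)).symm ![0, -1]) : ℝ) ≥ 1 / Lam) :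
    ∃ s : ℝ, 0 ≤ s ∧
      s ≤ d * (d + 2 * γ) * Lam /
          ((d + γ) + Real.sqrt ((d + γ) ^ 2 - d * (d + 2 * γ) * Lam ^ 2)) ∧
      ((WithLp.equiv 2 (Fin 2 → ℝ)).symm ![0, d] + s • w) ∈
        Metric.closedBall ((WithLp.equiv 2 (Fin 2 → ℝ)).symm ![0, -γ]) γ := by
  have hL0 : (0:ℝ) < Lam := lt_of_lt_of_le one_pos hLam
  set a := w 0 with ha
  set b := w 1 with hb
  have hw2 : a ^ 2 + b ^ 2 = 1 := by
    have h1 : Real.sqrt (∑ i : Fin 2, ‖w i‖ ^ 2) = 1 := by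
      rw [← EuclideanSpace.norm_eq]; exact hw
    have hnn : (0:ℝ) ≤ ∑ i : Fin 2, ‖w i‖ ^ 2 := by positivity
    have h2 : ∑ i : Fin 2, ‖w i‖ ^ 2 = 1 := by
      nlinarith [Real.sq_sqrt hnn]
    simpa [Fin.sum_univ_two, Real.norm_eq_abs, sq_abs] using h2
  have hinner : (inner ℝ w ((WithLp.equiv 2 (Fin 2 → ℝ)).symm ![0, -1]) : ℝ) = -b := by
    simp [PiLp.inner_apply, Fin.sum_univ_two, WithLp.equiv_symm_apply, PiLp.toLp_apply, ← hb]
  have hbL : b * Lam ≤ -1 := by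
    rw [hinner] at hangle
    have := (div_le_iff₀ hL0).mp hangle
    nlinarith
  have hD : 0 ≤ (d + γ) ^ 2 - d * (d + 2 * γ) * Lam ^ 2 := hcond
  obtain ⟨r, hr0, hr2, hrdef⟩ :
      ∃ r, 0 ≤ r ∧ r ^ 2 = (d + γ) ^ 2 - d * (d + 2 * γ) * Lam ^ 2 ∧
        r = Real.sqrt ((d + γ) ^ 2 - d * (d + 2 * γ) * Lam ^ 2) :=
    ⟨_, Real.sqrt_nonneg _, Real.sq_sqrt hD, rfl⟩
  have hrle : r ≤ d + γ := by
    nlinarith [mul_pos (mul_pos hd (by linarith : (0:ℝ) < d + 2 * γ)) (mul_pos hL0 hL0)]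
  have hE : 0 < (d + γ) + r := by nlinarith
  refine ⟨((d + γ) - r) / Lam, div_nonneg (by linarith) hL0.le, ?_, ?_⟩
  · rw [← hrdef, div_le_div_iff₀ hL0 hE]
    nlinarith
  · obtain ⟨s, hs0, hsL, hseq⟩ :
        ∃ s, 0 ≤ s ∧ Lam * s = (d + γ) - r ∧ s = ((d + γ) - r) / Lam :=
      ⟨_, div_nonneg (by linarith) hL0.le, by field_simp, rfl⟩
    rw [← hseq]
    have hprod : s * (b * Lam) ≤ s * (-1) := mul_le_mul_of_nonneg_left hbL hs0
    have h1 : 2 * (d + γ) * Lam * (s * (b * Lam)) ≤ 2 * (d + γ) * Lam * (s * (-1)) :=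
      mul_le_mul_of_nonneg_left hprod (by positivity)
    have e1 : Lam ^ 2 * s ^ 2 = ((d + γ) - r) ^ 2 := by
      rw [show Lam ^ 2 * s ^ 2 = (Lam * s) ^ 2 by ring, hsL]
    have h1' : 2 * (d + γ) * Lam ^ 2 * (s * b) ≤ -2 * (d + γ) * ((d + γ) - r) := by
      rw [← hsL]; linarith [h1]
    have hmain : Lam ^ 2 * (s ^ 2 + 2 * s * b * (d + γ) + d * (d + 2 * γ)) ≤ 0 := by
      linarith [e1, h1', hr2]
    have h2 : s ^ 2 + 2 * s * b * (d + γ) + d * (d + 2 * γ) ≤ 0 := by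
      have := le_of_mul_le_mul_left
        (by linarith :
          Lam ^ 2 * (s ^ 2 + 2 * s * b * (d + γ) + d * (d + 2 * γ)) ≤ Lam ^ 2 * 0)
        (pow_pos hL0 2)
      linarith
    have ha2 : a ^ 2 = 1 - b ^ 2 := by linarith
    have hsa : s ^ 2 * a ^ 2 = s ^ 2 - (s * b) ^ 2 := by rw [ha2]; ring
    have key : s ^ 2 * a ^ 2 + (d + s * b - (-γ)) ^ 2 ≤ γ ^ 2 := by linarith [h2, hsa]
    rw [Metric.mem_closedBall, EuclideanSpace.dist_eq]
    refine le_trans (Real.sqrt_le_sqrt ?_) (le_of_eq (Real.sqrt_sq hγ.le))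
    simp only [Fin.sum_univ_two, PiLp.add_apply, PiLp.smul_apply,
      WithLp.equiv_symm_apply, PiLp.toLp_apply, Matrix.cons_val_zero, Matrix.cons_val_one,
      Matrix.head_cons, smul_eq_mul, Real.dist_eq, sq_abs, ← ha, ← hb]
    linarith [key]
end

section
/- Let α₁, …, α_{n−1} ∈ ℝ with Σᵢ αᵢ² ≤ β, and let B be the arrow matrix as above. If c > 1 + 2β, then all eigenvalues of B are at least min(c, (c − β)/(1+c)) > 0; in particular B is positive definite. -/
open scoped Matrix

lemma arrow_posdef (n : ℕ) (α : Fin (n + 2) → ℝ) (β : ℝ)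
    (hβ' : ∑ j : Fin (n+1), (α j.succ) ^ 2 ≤ β) (hβ0 : 0 ≤ β)
    (c lam : ℝ) (hc : 1 + 2 * β < c)
    (hlam : lam < min c ((c - β) / (1 + c))) :
    ((Matrix.of fun i j : Fin (n+2) =>
      if i = 0 ∧ j = 0 then 1
      else if i = 0 then α j
      else if j = 0 then α i
      else if i = j then c else (0:ℝ)) - lam • 1).PosDef := by
  have hc1 : 1 < c := by linarith
  have hlam1 : lam < (c - β) / (1 + c) := lt_of_lt_of_le hlam (min_le_right _ _)
  have hlamlt1 : lam < 1 := by
    have h1 : (c - β) / (1 + c) < 1 := by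
      rw [div_lt_one (by linarith)]; linarith
    linarith
  have hlamc : lam < c := lt_of_lt_of_le hlam (min_le_left _ _)
  have hkey : β < (1 - lam) * (c - lam) := by
    have hm : (c - β) / (1 + c) * (1 + c) = c - β := by
      field_simp
    nlinarith [mul_pos (sub_pos.2 hlam1) (show (0:ℝ) < 1 + c by linarith),
      sq_nonneg ((c-β)/(1+c)), mul_self_nonneg ((c-β)/(1+c) - lam)]
  rw [Matrix.posDef_iff_dotProduct_mulVec]
  constructor
  · ext i j
    simp only [Matrix.conjTranspose_apply, Matrix.sub_apply, Matrix.of_apply, Matrix.smul_apply,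
      Matrix.one_apply, star_trivial]
    rcases eq_or_ne i 0 with hi | hi <;> rcases eq_or_ne j 0 with hj | hj <;>
      rcases eq_or_ne i j with hij | hij <;> simp_all [eq_comm]
  · intro x hx
    set S : ℝ := ∑ j : Fin (n+1), α j.succ * x j.succ with hS
    set Q : ℝ := ∑ j : Fin (n+1), (x j.succ)^2 with hQ
    have hQ0 : 0 ≤ Q := Finset.sum_nonneg fun j _ => sq_nonneg _
    have hCS : S^2 ≤ β * Q := by
      calc S^2 ≤ (∑ j : Fin (n+1), (α j.succ)^2) * Q :=
            Finset.sum_mul_sq_le_sq_mul_sq _ _ _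
        _ ≤ β * Q := mul_le_mul_of_nonneg_right hβ' hQ0
    have hform : dotProduct (star x)
        (((Matrix.of fun i j : Fin (n+2) =>
          if i = 0 ∧ j = 0 then 1
          else if i = 0 then α j
          else if j = 0 then α i
          else if i = j then c else (0:ℝ)) - lam • 1) *ᵥ x)
        = (1 - lam) * (x 0)^2 + 2 * (x 0) * S + (c - lam) * Q := by
      rw [star_trivial, Matrix.sub_mulVec, dotProduct_sub, Matrix.smul_mulVec,
        Matrix.one_mulVec, dotProduct_smul, smul_eq_mul]
      have hxx : dotProduct x x = (x 0)^2 + Q := by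
        simp only [dotProduct]
        rw [Fin.sum_univ_succ]
        simp [hQ, sq]
      have hBx : dotProduct x
          ((Matrix.of fun i j : Fin (n+2) =>
            if i = 0 ∧ j = 0 then 1
            else if i = 0 then α j
            else if j = 0 then α i
            else if i = j then c else (0:ℝ)) *ᵥ x)
          = (x 0)^2 + 2 * (x 0) * S + c * Q := by
        simp only [dotProduct, Matrix.mulVec, Matrix.of_apply]
        rw [Fin.sum_univ_succ]
        have hrow0 : (∑ j : Fin (n+2), (if (0:Fin (n+2)) = 0 ∧ j = 0 then 1
            else if (0:Fin (n+2)) = 0 then α j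
            else if j = 0 then α (0:Fin (n+2))
            else if (0:Fin (n+2)) = j then c else (0:ℝ)) * x j)
            = x 0 + S := by
          rw [Fin.sum_univ_succ]
          simp [Fin.succ_ne_zero, hS]
        rw [hrow0]
        have hrowi : ∀ i : Fin (n+1), (∑ j : Fin (n+2), (if i.succ = 0 ∧ j = 0 then 1
            else if i.succ = 0 then α j
            else if j = 0 then α i.succ
            else if i.succ = j then c else (0:ℝ)) * x j)
            = α i.succ * x 0 + c * x i.succ := by
          intro i
          rw [Fin.sum_univ_succ]
          simp only [Fin.succ_ne_zero, if_neg (Fin.succ_ne_zero i), false_and, if_false,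
            Fin.succ_inj]
          rw [Finset.sum_eq_single i]
          · simp [Fin.succ_ne_zero]
          · intro b _ hb
            simp [Fin.succ_ne_zero, hb.symm]
          · intro h; exact absurd (Finset.mem_univ i) h
        simp only [hrowi]
        have e : ∑ j : Fin (n+1), x j.succ * (α j.succ * x 0 + c * x j.succ)
            = x 0 * S + c * Q := by
          rw [hS, hQ, Finset.mul_sum, Finset.mul_sum, ← Finset.sum_add_distrib]
          exact Finset.sum_congr rfl fun j _ => by ring
        rw [e]
        ring
      rw [hxx, hBx]
      ring
    rw [hform]
    rcases eq_or_lt_of_le hQ0 with hQz | hQpos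
    · have hSz : S = 0 := by nlinarith [sq_nonneg S]
      have hx0 : x 0 ≠ 0 := by
        intro h0
        apply hx
        funext i
        rcases Fin.eq_zero_or_eq_succ i with rfl | ⟨j, rfl⟩
        · exact h0
        · have hall := (Finset.sum_eq_zero_iff_of_nonneg
            (fun j (_ : j ∈ Finset.univ) => sq_nonneg (x (Fin.succ j)))).mp hQz.symm
          have := hall j (Finset.mem_univ j)
          exact pow_eq_zero_iff (n := 2) (by norm_num) |>.mp this
      have hx0sq : 0 < (x 0)^2 := by positivity
      rw [hSz, ← hQz]
      nlinarith [mul_pos (show (0:ℝ) < 1 - lam by linarith) hx0sq]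
    · nlinarith [sq_nonneg ((1-lam) * x 0 + S), sq_nonneg (x 0),
        mul_pos hQpos (sub_pos.2 hkey)]

/-- If `Σαᵢ² ≤ β` and `c > 1 + 2β`, then every eigenvalue of the arrow matrix `B` is at
least `min(c, (c-β)/(1+c)) > 0`; in particular `B` is positive definite. -/
theorem stmt9 (n : ℕ) (α : Fin (n + 2) → ℝ) (hα0 : α 0 = 0)
    (β : ℝ) (hβ : ∑ i, (α i) ^ 2 ≤ β) (c : ℝ) (hc : 1 + 2 * β < c)
    (B : Matrix (Fin (n + 2)) (Fin (n + 2)) ℝ)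
    (hB : B = Matrix.of fun i j =>
      if i = 0 ∧ j = 0 then 1
      else if i = 0 then α j
      else if j = 0 then α i
      else if i = j then c else 0) :
    (0 < min c ((c - β) / (1 + c))) ∧
    (∀ lam : ℝ, (B - lam • (1 : Matrix (Fin (n + 2)) (Fin (n + 2)) ℝ)).det = 0 →
      min c ((c - β) / (1 + c)) ≤ lam) ∧
    B.PosDef := by
  have hβ0 : 0 ≤ β := le_trans (Finset.sum_nonneg fun i _ => sq_nonneg _) hβ
  have hβ' : ∑ j : Fin (n+1), (α j.succ) ^ 2 ≤ β := by
    have h := Fin.sum_univ_succ (fun i => (α i)^2)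
    rw [h, hα0] at hβ
    simpa using hβ
  have hmpos : 0 < min c ((c - β) / (1 + c)) :=
    lt_min (by linarith) (div_pos (by linarith) (by linarith))
  have key : ∀ lam : ℝ, lam < min c ((c - β) / (1 + c)) → (B - lam • 1).PosDef := by
    intro lam hlam
    rw [hB]
    exact arrow_posdef n α β hβ' hβ0 c lam hc hlam
  refine ⟨hmpos, ?_, ?_⟩
  · intro lam hdet
    by_contra hlt
    push_neg at hlt
    exact (key lam hlt).det_pos.ne' hdet
  · have h0 := key 0 hmpos
    simpa using h0
end

section
/- Let γ > r > 0, and in ℝⁿ let B_γ(x′) be a ball of radius γ, x_r a point on its boundary sphere, and ν the outward unit normal at x_r. Then the set B_{√(γr)}(x_r) ∩ {x : (x − x_r)·ν ≤ −3r} is contained in B_{γ−2r}(x′), provided r < γ/4. -/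
/-- Parabolic-scaling inclusion: for `0 < r < γ/4`, a point `x_r` on the sphere of radius
`γ` around `x'` with outward unit normal `ν = (x_r - x')/γ`, the set
`B_{√(γr)}(x_r) ∩ {(x - x_r)·ν ≤ -3r}` is contained in `B_{γ-2r}(x')`. -/
theorem stmt17 (n : ℕ) (γ r : ℝ) (hr : 0 < r) (hrγ : r < γ / 4)
    (x' xr : EuclideanSpace ℝ (Fin n)) (hxr : dist xr x' = γ)
    (ν : EuclideanSpace ℝ (Fin n)) (hν : ν = γ⁻¹ • (xr - x')) :
    Metric.closedBall xr (Real.sqrt (γ * r))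
        ∩ {x : EuclideanSpace ℝ (Fin n) | (inner ℝ (x - xr) ν : ℝ) ≤ -3 * r}
      ⊆ Metric.closedBall x' (γ - 2 * r) := by
  intro x hx
  obtain ⟨hx1, hx2⟩ := hx
  rw [Metric.mem_closedBall, dist_eq_norm] at hx1 ⊢
  rw [dist_eq_norm] at hxr
  have hγ : 0 < γ := by linarith
  have hin : (inner ℝ (x - xr) (xr - x') : ℝ) ≤ -3 * r * γ := by
    have heq : (inner ℝ (x - xr) ν : ℝ) = γ⁻¹ * inner ℝ (x - xr) (xr - x') := by
      rw [hν, real_inner_smul_right]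
    simp only [Set.mem_setOf_eq] at hx2
    rw [heq] at hx2
    have := mul_le_mul_of_nonneg_left hx2 hγ.le
    rw [← mul_assoc, mul_inv_cancel₀ hγ.ne', one_mul] at this
    linarith
  have hsq : ‖x - xr‖ ^ 2 ≤ γ * r := by
    have h := Real.sq_sqrt (by positivity : (0:ℝ) ≤ γ * r)
    nlinarith [norm_nonneg (x - xr), Real.sqrt_nonneg (γ * r)]
  have key : ‖x - x'‖ ^ 2 ≤ (γ - 2 * r) ^ 2 := by
    have hsub : x - x' = (x - xr) + (xr - x') := by abel
    rw [hsub, norm_add_sq_real, hxr]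
    nlinarith
  have h1 : (0:ℝ) ≤ γ - 2 * r := by linarith
  nlinarith [norm_nonneg (x - x')]
end
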